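/- arXiv:2005.14365 — 2 statements merged into one kernel-verified Lean document; each statement's English description precedes it below -/
import Mathlib

section
/- Let p be a prime with p ≡ 7 (mod 8), let a be the largest integer with a < √p − 1, and let f = x⁴ − 2a x³ + (a² + p)x² − 2apx + p². Then f is irreducible over ℚ, and K = ℚ[x]/(f) is a CM field of degree 4 whose maximal totally real subfield is isomorphic to ℚ(√p); moreover the middle coefficient a² + p of f is coprime to p. -/
open Polynomial IntermediateField

noncomputable section

/-- The data exhibiting `ℚ[x]/(f)` as a CM field of degree 4 whose maximal totally real
subfield is `ℚ(√p)`: a number field `K` of degree 4 generated by a root `π` of `f`, with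
complex conjugation `conj` (a nontrivial involution commuting with complex conjugation
under every complex embedding, so that `K` is CM), and a square root `s` of `p` in `K`
fixed by `conj` whose fixed field — the maximal totally real subfield — is exactly
`ℚ(s) ≅ ℚ(√p)`. -/
structure DegFourCMWitness (p : ℕ) (f : ℚ[X]) where
  K : Type
  [fieldK : Field K]
  [nfK : NumberField K]
  /-- `K = ℚ[x]/(f)`: it is generated by a root `π` of `f`. -/
  π : K
  hroot : Polynomial.aeval π f = 0
  hgen : Algebra.adjoin ℚ ({π} : Set K) = ⊤
  /-- `K` has degree 4 over `ℚ`. -/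
  hdeg : Module.finrank ℚ K = 4
  /-- `K` is a CM field, with complex conjugation `conj`. -/
  conj : K ≃ₐ[ℚ] K
  hconj_ne : conj ≠ AlgEquiv.refl
  hconj_inv : ∀ x, conj (conj x) = x
  hstar : ∀ (phi : K →+* ℂ) (x : K), phi (conj x) = (starRingEnd ℂ) (phi x)
  /-- the maximal totally real subfield of `K` (the fixed field of `conj`)
  is `ℚ(s)` for a square root `s` of `p`, hence is isomorphic to `ℚ(√p)`. -/
  s : K
  hs_fixed : conj s = s
  hs_sq : s ^ 2 = (p : K)
  hs_gen : ∀ x : K, conj x = x → x ∈ Algebra.adjoin ℚ ({s} : Set K)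

lemma aux_conj_quadratic (P c : ℝ) (hdisc : c^2 < 4*P) (w : ℂ)
    (hw : w^2 - (c:ℂ)*w + (P:ℂ) = 0) : (starRingEnd ℂ) w = (c:ℂ) - w := by
  have him : w.im ≠ 0 := by
    intro h0
    have hre : w = ((w.re : ℝ) : ℂ) := by
      apply Complex.ext <;> simp [h0]
    rw [hre] at hw
    have : (w.re:ℝ)^2 - c*w.re + P = 0 := by exact_mod_cast hw
    nlinarith [sq_nonneg (w.re - c/2)]
  have hconjw : ((starRingEnd ℂ) w)^2 - (c:ℂ)*((starRingEnd ℂ) w) + (P:ℂ) = 0 := by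
    have := congrArg (starRingEnd ℂ) hw
    simpa [map_sub, map_add, map_mul, map_pow, Complex.conj_ofReal] using this
  have hne : w - (starRingEnd ℂ) w ≠ 0 := by
    intro h
    have : (starRingEnd ℂ) w = w := by linear_combination -h
    rw [Complex.conj_eq_iff_im] at this
    exact him this
  have hfac : (w - (starRingEnd ℂ) w) * (w + (starRingEnd ℂ) w - c) = 0 := by
    linear_combination hw - hconjw
  rcases mul_eq_zero.mp hfac with h | h
  · exact absurd h hne
  · linear_combination h

set_option maxHeartbeats 2000000 in
set_option synthInstance.maxHeartbeats 400000 in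
/-- Let `p` be a prime with `p ≡ 7 (mod 8)`, let `a` be the largest
integer with `a < √p − 1`, and let `f = x⁴ − 2ax³ + (a² + p)x² − 2apx + p²`.  Then `f` is
irreducible over `ℚ`, `ℚ[x]/(f)` is a CM field of degree 4 whose maximal totally real
subfield is isomorphic to `ℚ(√p)`, and the middle coefficient `a² + p` is coprime to `p`. -/
theorem weil_polynomial_family_is_CM
    (p : ℕ) (hp : p.Prime) (hp7 : p % 8 = 7)
    (a : ℤ) (ha1 : (a : ℝ) < Real.sqrt p - 1) (ha2 : Real.sqrt p - 1 ≤ (a : ℝ) + 1) :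
    Irreducible (X ^ 4 - C (2 * (a : ℚ)) * X ^ 3 + C ((a : ℚ) ^ 2 + (p : ℚ)) * X ^ 2
        - C (2 * (a : ℚ) * (p : ℚ)) * X + C ((p : ℚ) ^ 2)) ∧
    Nonempty (DegFourCMWitness p
      (X ^ 4 - C (2 * (a : ℚ)) * X ^ 3 + C ((a : ℚ) ^ 2 + (p : ℚ)) * X ^ 2
        - C (2 * (a : ℚ) * (p : ℚ)) * X + C ((p : ℚ) ^ 2))) ∧
    Int.gcd (a ^ 2 + (p : ℤ)) (p : ℤ) = 1 := by
  set fq : ℚ[X] := X ^ 4 - C (2 * (a : ℚ)) * X ^ 3 + C ((a : ℚ) ^ 2 + (p : ℚ)) * X ^ 2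
        - C (2 * (a : ℚ) * (p : ℚ)) * X + C ((p : ℚ) ^ 2) with hfq
  -- ## basic real estimates
  have hp7' : 7 ≤ p := by omega
  have hp0 : 0 < p := by omega
  have hp7r : (7:ℝ) ≤ p := by exact_mod_cast hp7'
  set r := Real.sqrt p with hr
  have hr0 : 0 < r := Real.sqrt_pos.mpr (by positivity)
  have hr2 : r ^ 2 = p := Real.sq_sqrt (by positivity)
  have hrirr : Irrational r := hp.irrational_sqrt
  have hrgt : 2 < r := by nlinarith
  have ha_pos : 1 ≤ a := by
    have h0 : (0:ℝ) < a := by linarith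
    have : (0:ℤ) < a := by exact_mod_cast h0
    omega
  have ha_pos0 : (0:ℝ) < a := by linarith
  have ha_lt : (a:ℝ) < r := by linarith
  have ha_ltp : (a:ℝ) < p := by nlinarith
  have ha_ltp' : a < (p:ℤ) := by exact_mod_cast ha_ltp
  -- ## the gcd statement
  have hgcd : Int.gcd (a ^ 2 + (p : ℤ)) (p : ℤ) = 1 := by
    have hpz : Prime (p:ℤ) := Nat.prime_iff_prime_int.mp hp
    rw [← Int.isCoprime_iff_gcd_eq_one]
    rw [isCoprime_comm, Prime.coprime_iff_not_dvd hpz]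
    intro hdvd
    have : (p:ℤ) ∣ a ^ 2 := (dvd_add_right (dvd_refl _)).mp (by rwa [add_comm] at hdvd)
    have hpa : (p:ℤ) ∣ a := hpz.dvd_of_dvd_pow this
    have := Int.le_of_dvd (by omega) hpa
    omega
  -- ## the complex root z
  set t : ℝ := ((a:ℝ) + r) / 2 with ht
  have ht0 : 0 < t := by positivity
  have htr : t < r := by rw [ht]; linarith
  set d : ℝ := p - t ^ 2 with hd
  have hd0 : 0 < d := by rw [hd]; nlinarith
  set u : ℝ := Real.sqrt d with hu
  have hu0 : 0 < u := Real.sqrt_pos.mpr hd0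
  have hu2 : u ^ 2 = d := Real.sq_sqrt hd0.le
  set z : ℂ := (t:ℂ) + (u:ℂ) * Complex.I with hz
  have hz_ne_conj : z ≠ (starRingEnd ℂ) z := by
    intro h
    have := congrArg Complex.im h
    simp [hz] at this
    nlinarith
  have hc2t : (a:ℂ) + (r:ℂ) = ((2*t :ℝ) :ℂ) := by push_cast [ht]; ring
  have hu2c : ((u:ℂ))^2 = ((d:ℝ):ℂ) := by exact_mod_cast congrArg (Complex.ofReal) hu2
  have hdc : ((d:ℝ):ℂ) = (p:ℂ) - ((t:ℝ):ℂ)^2 := by push_cast [hd]; ring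
  have hzq : z^2 - ((a:ℂ) + (r:ℂ)) * z + (p:ℂ) = 0 := by
    rw [hc2t, hz]
    push_cast
    linear_combination (Complex.I^2) * hu2c + ((d:ℝ):ℂ) * Complex.I_sq - hdc
  have hstarz : (starRingEnd ℂ) z = (a:ℂ) + (r:ℂ) - z := by
    rw [hc2t, hz]
    push_cast
    apply Complex.ext <;> simp <;> ring
  -- z is a root of fq
  clear_value z u d t r
  have hr2c : ((r:ℝ):ℂ)^2 = (p:ℂ) := by exact_mod_cast congrArg Complex.ofReal hr2
  have key : z^2 - (a:ℂ)*z + (p:ℂ) = (r:ℂ)*z := by linear_combination hzq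
  have hz4 : aeval z fq = 0 := by
    rw [hfq]
    simp only [map_add, map_sub, map_mul, map_pow, aeval_X, aeval_C, map_ofNat, map_intCast,
      map_natCast]
    linear_combination (z^2 - (a:ℂ)*z + (p:ℂ) + (r:ℂ)*z) * key + z^2 * hr2c
  have hfq_monic : fq.Monic := by rw [hfq]; monicity!
  have hfq_deg : fq.natDegree = 4 := by rw [hfq]; compute_degree!
  have hz_int : IsIntegral ℚ z := ⟨fq, hfq_monic, hz4⟩
  have hz_ne : z ≠ 0 := by
    intro h
    rw [h] at hzq
    simp at hzq
    have : p = 0 := by exact_mod_cast hzq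
    omega
  -- ## the field K = ℚ(z) and its degree
  have hzinv : z * z⁻¹ = 1 := mul_inv_cancel₀ hz_ne
  have hr_eq : (r:ℂ) = z + (p:ℂ) * z⁻¹ - (a:ℂ) := by
    linear_combination (-z⁻¹) * hzq - ((r:ℂ) + (a:ℂ) - z) * hzinv
  have hzK : z ∈ ℚ⟮z⟯ := mem_adjoin_simple_self ℚ z
  have hrK : (r:ℂ) ∈ ℚ⟮z⟯ := by
    rw [hr_eq]
    exact sub_mem (add_mem hzK (mul_mem (IntermediateField.natCast_mem _ p) (inv_mem hzK)))
      (IntermediateField.intCast_mem _ a)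
  have hq_irr : Irreducible (X ^ 2 - C ((p:ℚ))) := by
    rw [X_pow_sub_C_irreducible_iff_of_prime Nat.prime_two]
    intro b hb
    apply hrirr
    refine ⟨|b|, ?_⟩
    have hb' : ((b:ℝ))^2 = (p:ℝ) := by exact_mod_cast congrArg (Rat.cast (K := ℝ)) hb
    have : r = Real.sqrt ((b:ℝ)^2) := by rw [hb']; rw [← hr2, Real.sqrt_sq hr0.le]
    rw [this, Real.sqrt_sq_eq_abs]
    push_cast
    ring
  have hmr : minpoly ℚ ((r:ℝ):ℂ) = X ^ 2 - C ((p:ℚ)) := by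
    refine (minpoly.eq_of_irreducible_of_monic hq_irr ?_ ?_).symm
    · simp only [map_sub, map_pow, aeval_X, aeval_C, map_natCast]
      linear_combination hr2c
    · monicity!
  haveI instFD : FiniteDimensional ℚ ℚ⟮z⟯ := adjoin.finiteDimensional hz_int
  have hfin : Module.finrank ℚ ℚ⟮z⟯ = (minpoly ℚ z).natDegree := adjoin.finrank hz_int
  set sK : ℚ⟮z⟯ := ⟨(r:ℂ), hrK⟩ with hsK
  have hsK_int : IsIntegral ℚ sK := IsIntegral.of_finite ℚ sK
  have hmap : algebraMap ℚ⟮z⟯ ℂ sK = ((r:ℝ):ℂ) := rfl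
  have hms : minpoly ℚ sK = X ^ 2 - C ((p:ℚ)) := by
    rw [← hmr, ← hmap, minpoly.algebraMap_eq (algebraMap ℚ⟮z⟯ ℂ).injective]
  have hms_deg : (X ^ 2 - C ((p:ℚ))).natDegree = 2 := by compute_degree!
  have hdvd2 : 2 ∣ Module.finrank ℚ ℚ⟮z⟯ := by
    have hdd := minpoly.degree_dvd hsK_int
    rw [hms, hms_deg] at hdd
    exact hdd
  have hm_dvd : minpoly ℚ z ∣ fq := minpoly.dvd ℚ z hz4
  have hm_le : (minpoly ℚ z).natDegree ≤ 4 := hfq_deg ▸ natDegree_le_of_dvd hm_dvd hfq_monic.ne_zero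
  have hfix : ∀ x ∈ ℚ⟮((r:ℝ):ℂ)⟯, (starRingEnd ℂ) x = x := by
    intro x hx
    induction hx using adjoin_induction with
    | mem x hx => rcases hx with rfl; exact Complex.conj_ofReal r
    | algebraMap q => simp [Complex.conj_ofReal]
    | add x y _ _ hx hy => rw [map_add, hx, hy]
    | inv x _ hx => rw [map_inv₀, hx]
    | mul x y _ _ hx hy => rw [map_mul, hx, hy]
  have hne2 : (minpoly ℚ z).natDegree ≠ 2 := by
    intro h2
    have hle : ℚ⟮((r:ℝ):ℂ)⟯ ≤ ℚ⟮z⟯ := by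
      rw [adjoin_simple_le_iff]; exact hrK
    have hr_int : IsIntegral ℚ ((r:ℝ):ℂ) := ⟨X ^ 2 - C ((p:ℚ)), by monicity!, by
      rw [← aeval_def]
      simp only [map_sub, map_pow, aeval_X, aeval_C, map_natCast]
      linear_combination hr2c⟩
    have hfr : Module.finrank ℚ ℚ⟮((r:ℝ):ℂ)⟯ = 2 := by
      rw [adjoin.finrank hr_int, hmr]
      compute_degree!
    have heq : ℚ⟮((r:ℝ):ℂ)⟯ = ℚ⟮z⟯ :=
      IntermediateField.eq_of_le_of_finrank_le hle (by rw [hfr, hfin, h2])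
    have : z ∈ ℚ⟮((r:ℝ):ℂ)⟯ := heq ▸ hzK
    exact hz_ne_conj (hfix z this).symm
  have hm4 : (minpoly ℚ z).natDegree = 4 := by
    rcases hdvd2 with ⟨k, hk⟩
    rw [hfin] at hk
    have hmpos := minpoly.natDegree_pos hz_int
    omega
  have hfq_eq : minpoly ℚ z = fq :=
    Polynomial.eq_of_monic_of_associated (minpoly.monic hz_int) hfq_monic
      (Polynomial.associated_of_dvd_of_natDegree_le hm_dvd hfq_monic.ne_zero
        (by rw [hfq_deg, hm4]))
  have hfq_irr : Irreducible fq := hfq_eq ▸ minpoly.irreducible hz_int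
  have hdeg4 : Module.finrank ℚ ℚ⟮z⟯ = 4 := by rw [hfin, hm4]
  -- ## complex conjugation on K
  have hstarzK : ∀ x ∈ ℚ⟮z⟯, (starRingEnd ℂ) x ∈ ℚ⟮z⟯ := by
    intro x hx
    induction hx using adjoin_induction with
    | mem x hx =>
        rcases hx with rfl
        rw [hstarz]
        exact sub_mem (add_mem (IntermediateField.intCast_mem _ a) hrK) hzK
    | algebraMap q =>
        rw [eq_ratCast (algebraMap ℚ ℂ) q, map_ratCast]
        exact SubfieldClass.ratCast_mem _ q
    | add x y hx hy hx' hy' => rw [map_add]; exact add_mem hx' hy'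
    | inv x hx hx' => rw [map_inv₀]; exact inv_mem hx'
    | mul x y hx hy hx' hy' => rw [map_mul]; exact mul_mem hx' hy'
  have hconj_pack : ∃ c : ℚ⟮z⟯ ≃ₐ[ℚ] ℚ⟮z⟯,
      ∀ x : ℚ⟮z⟯, ((c x : ℚ⟮z⟯) : ℂ) = (starRingEnd ℂ) (x : ℂ) :=
    ⟨{ toFun := fun x => ⟨(starRingEnd ℂ) x, hstarzK x x.2⟩
       invFun := fun x => ⟨(starRingEnd ℂ) x, hstarzK x x.2⟩
       left_inv := fun x => Subtype.ext (Complex.conj_conj (x:ℂ))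
       right_inv := fun x => Subtype.ext (Complex.conj_conj (x:ℂ))
       map_mul' := fun x y => Subtype.ext (by
         show (starRingEnd ℂ) ((x * y : ℚ⟮z⟯) : ℂ)
           = ((starRingEnd ℂ) (x:ℂ)) * ((starRingEnd ℂ) (y:ℂ))
         rw [MulMemClass.coe_mul, map_mul])
       map_add' := fun x y => Subtype.ext (by
         show (starRingEnd ℂ) ((x + y : ℚ⟮z⟯) : ℂ)
           = ((starRingEnd ℂ) (x:ℂ)) + ((starRingEnd ℂ) (y:ℂ))
         rw [AddMemClass.coe_add, map_add])
       commutes' := fun q => Subtype.ext (by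
         show (starRingEnd ℂ) (algebraMap ℚ ℂ q) = algebraMap ℚ ℂ q
         simp) }, fun x => rfl⟩
  obtain ⟨conj, hconj_coe⟩ := hconj_pack
  haveI instNF : NumberField ℚ⟮z⟯ :=
    { to_charZero := inferInstance, to_finiteDimensional := instFD }
  set π : ℚ⟮z⟯ := ⟨z, hzK⟩ with hπdef
  have hπ_coe : (π : ℂ) = z := rfl
  have hsK_coe : (sK : ℂ) = ((r:ℝ):ℂ) := rfl
  clear_value π sK
  have hroot : aeval π fq = 0 := by
    apply Subtype.ext
    erw [← IntermediateField.aeval_coe, hπ_coe, ZeroMemClass.coe_zero]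
    exact hz4
  have hgen : Algebra.adjoin ℚ ({π} : Set ℚ⟮z⟯) = ⊤ := by
    have h1 : (Algebra.adjoin ℚ ({π} : Set ℚ⟮z⟯)).map ℚ⟮z⟯.val
        = Algebra.adjoin ℚ ({z} : Set ℂ) := by
      erw [AlgHom.map_adjoin_singleton]
      congr 1
      rw [show ℚ⟮z⟯.val π = z from hπ_coe]
    have h2 : ((⊤ : Subalgebra ℚ ℚ⟮z⟯)).map ℚ⟮z⟯.val = Algebra.adjoin ℚ ({z} : Set ℂ) := by
      erw [Algebra.map_top, IntermediateField.range_val,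
        adjoin_simple_toSubalgebra_of_isAlgebraic hz_int.isAlgebraic]
    exact Subalgebra.map_injective Subtype.coe_injective (h1.trans h2.symm)
  have hconjπ : conj π = (a : ℚ⟮z⟯) + sK - π := by
    apply Subtype.ext
    rw [hconj_coe]
    push_cast [hπ_coe, hsK_coe]
    exact hstarz
  have hKs2 : sK^2 = (p : ℚ⟮z⟯) := by
    apply Subtype.ext
    push_cast [hsK_coe]
    exact hr2c
  have hKquad : π^2 - ((a : ℚ⟮z⟯) + sK) * π + (p : ℚ⟮z⟯) = 0 := by
    apply Subtype.ext
    push_cast [hπ_coe, hsK_coe]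
    exact hzq
  have hconj_ne : conj ≠ AlgEquiv.refl := by
    intro h
    apply hz_ne_conj
    have h2 := congrArg (fun e : ℚ⟮z⟯ ≃ₐ[ℚ] ℚ⟮z⟯ => ((e π : ℚ⟮z⟯) : ℂ)) h
    simp only [AlgEquiv.coe_refl, id_eq, hconj_coe, hπ_coe] at h2
    exact h2.symm
  have hconj_inv : ∀ x : ℚ⟮z⟯, conj (conj x) = x := fun x => by
    apply Subtype.ext
    rw [hconj_coe, hconj_coe, Complex.conj_conj]
  -- the CM property
  have hstar : ∀ (phi : ℚ⟮z⟯ →+* ℂ) (x : ℚ⟮z⟯), phi (conj x) = (starRingEnd ℂ) (phi x) := by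
    intro phi
    -- key computation on the generator
    have hπkey : phi (conj π) = (starRingEnd ℂ) (phi π) := by
      set w : ℂ := phi π with hw
      set σ : ℂ := phi sK with hσ
      have hquad : w^2 - ((a:ℂ) + σ) * w + (p:ℂ) = 0 := by
        have := congrArg phi hKquad
        simpa [map_add, map_sub, map_mul, map_pow, map_intCast, map_natCast] using this
      have hσ2 : σ^2 = (p:ℂ) := by
        have := congrArg phi hKs2
        simpa [map_pow, map_natCast] using this
      have hσpm : σ = ((r:ℝ):ℂ) ∨ σ = -((r:ℝ):ℂ) := by
        have hfac : (σ - ((r:ℝ):ℂ)) * (σ + ((r:ℝ):ℂ)) = 0 := by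
          linear_combination hσ2 - hr2c
        rcases mul_eq_zero.mp hfac with h | h
        · left; linear_combination h
        · right; linear_combination h
      have hLHS : phi (conj π) = (a:ℂ) + σ - w := by
        rw [hconjπ]
        simp [map_add, map_sub, map_intCast]
        rfl
      rcases hσpm with h | h
      · have hc := aux_conj_quadratic p ((a:ℝ) + r) (by nlinarith) w
          (by rw [h] at hquad; push_cast at hquad ⊢; linear_combination hquad)
        rw [hLHS, hc, h]
        push_cast
        ring
      · have hc := aux_conj_quadratic p ((a:ℝ) - r) (by nlinarith) w
          (by rw [h] at hquad; push_cast at hquad ⊢; linear_combination hquad)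
        rw [hLHS, hc, h]
        push_cast
        ring
    -- extend from the generator to all of K
    have hle : Algebra.adjoin ℚ ({π} : Set ℚ⟮z⟯) ≤
        AlgHom.equalizer (phi.toRatAlgHom.comp conj.toAlgHom)
          ((starRingEnd ℂ).toRatAlgHom.comp phi.toRatAlgHom) := by
      apply Algebra.adjoin_le
      intro x hx
      rcases hx with rfl
      exact hπkey
    rw [hgen] at hle
    intro x
    exact hle (Algebra.mem_top : x ∈ ⊤)
  -- the fixed field
  have hs_fixed : conj sK = sK := by
    apply Subtype.ext
    rw [hconj_coe, hsK_coe]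
    exact Complex.conj_ofReal r
  have hs_gen : ∀ x : ℚ⟮z⟯, conj x = x → x ∈ Algebra.adjoin ℚ ({sK} : Set ℚ⟮z⟯) := by
    let Fix : IntermediateField ℚ ℚ⟮z⟯ :=
    { carrier := {x | conj x = x}
      mul_mem' := fun {x y} hx hy => by
        simp only [Set.mem_setOf_eq] at *
        rw [map_mul, hx, hy]
      one_mem' := map_one conj
      add_mem' := fun {x y} hx hy => by
        simp only [Set.mem_setOf_eq] at *
        rw [map_add, hx, hy]
      zero_mem' := map_zero conj
      algebraMap_mem' := fun q => conj.commutes q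
      inv_mem' := fun x hx => by
        simp only [Set.mem_setOf_eq] at *
        rw [map_inv₀, hx] }
    have hmemFix : ∀ y : ℚ⟮z⟯, y ∈ Fix ↔ conj y = y := fun y => Iff.rfl
    haveI : FiniteDimensional ℚ (↥Fix) := inferInstance
    have hdvdFix : Module.finrank ℚ (↥Fix) ∣ 4 := by
      refine ⟨Module.finrank (↥Fix) (↥ℚ⟮z⟯), ?_⟩
      rw [← hdeg4]
      exact (Module.finrank_mul_finrank ℚ (↥Fix) (↥ℚ⟮z⟯)).symm
    have hFix_netop : Fix ≠ ⊤ := by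
      intro h
      apply hz_ne_conj
      have hπF : π ∈ Fix := h ▸ IntermediateField.mem_top
      have h3 : conj π = π := (hmemFix π).mp hπF
      have h2 := congrArg Subtype.val h3
      rw [hconj_coe, hπ_coe] at h2
      exact h2.symm
    have hFix_le2 : Module.finrank ℚ (↥Fix) ≤ 2 := by
      by_contra hgt
      push_neg at hgt
      have hle4 : Module.finrank ℚ (↥Fix) ≤ 4 := Nat.le_of_dvd (by norm_num) hdvdFix
      have h34 : Module.finrank ℚ (↥Fix) = 3 ∨ Module.finrank ℚ (↥Fix) = 4 := by omega
      have h4 : Module.finrank ℚ (↥Fix) = 4 := by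
        rcases h34 with h | h
        · rw [h] at hdvdFix; norm_num at hdvdFix
        · exact h
      exact hFix_netop (IntermediateField.eq_of_le_of_finrank_le le_top
        (by rw [IntermediateField.finrank_top', hdeg4, h4]))
    have hEle : ℚ⟮sK⟯ ≤ Fix := by rw [adjoin_simple_le_iff]; exact (hmemFix sK).mpr hs_fixed
    have hEfin : Module.finrank ℚ (↥ℚ⟮sK⟯) = 2 := by rw [adjoin.finrank hsK_int, hms, hms_deg]
    have hEF : ℚ⟮sK⟯ = Fix := IntermediateField.eq_of_le_of_finrank_le hEle
      (by rw [hEfin]; exact hFix_le2)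
    intro x hx
    have hxF : x ∈ Fix := (hmemFix x).mpr hx
    rw [← hEF] at hxF
    rw [← adjoin_simple_toSubalgebra_of_isAlgebraic hsK_int.isAlgebraic]
    rwa [IntermediateField.mem_toSubalgebra]
  exact ⟨hfq_irr, Nonempty.intro
    { K := ℚ⟮z⟯, π := π, hroot := hroot, hgen := hgen, hdeg := hdeg4,
      conj := conj, hconj_ne := hconj_ne, hconj_inv := hconj_inv, hstar := hstar,
      s := sK, hs_fixed := hs_fixed, hs_sq := hKs2, hs_gen := hs_gen }, hgcd⟩

end
end

section
/- Let p be a prime with p ≡ 7 (mod 8) and let a be the largest integer with a < √p − 1. Then 32·p^{5/2} < 4p·(p − a²)·(9p − a²) < 144·p^{5/2}. (Consequently, for the minimal order R of the corresponding isogeny class, the discriminant ratio satisfies 32 p^{5/2} < |Δ_R/Δ_{R⁺}| < 144 p^{5/2}.) -/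
set_option maxHeartbeats 1000000 in
/-- Let `p` be a prime with `p ≡ 7 (mod 8)` and let `a` be the largest
integer with `a < √p − 1`.  Then `32·p^{5/2} < 4p·(p − a²)·(9p − a²) < 144·p^{5/2}`. -/
theorem discriminant_ratio_bounds
    (p : ℕ) (hp : p.Prime) (hp7 : p % 8 = 7)
    (a : ℤ) (ha1 : (a : ℝ) < Real.sqrt p - 1) (ha2 : Real.sqrt p - 1 ≤ (a : ℝ) + 1) :
    32 * (p : ℝ) ^ ((5 : ℝ) / 2)
        < 4 * (p : ℝ) * ((p : ℝ) - (a : ℝ) ^ 2) * (9 * (p : ℝ) - (a : ℝ) ^ 2) ∧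
      4 * (p : ℝ) * ((p : ℝ) - (a : ℝ) ^ 2) * (9 * (p : ℝ) - (a : ℝ) ^ 2)
        < 144 * (p : ℝ) ^ ((5 : ℝ) / 2) := by
  set s := Real.sqrt p with hs_def
  have hp7' : (7 : ℝ) ≤ p := by
    have : 7 ≤ p := by omega
    exact_mod_cast this
  have hp0 : (0 : ℝ) < p := by linarith
  have hs0 : 0 ≤ s := Real.sqrt_nonneg _
  have hs2 : s ^ 2 = p := Real.sq_sqrt (le_of_lt hp0)
  have hs : 2 < s := by nlinarith
  have halow : s - 2 ≤ (a : ℝ) := by linarith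
  have ha0 : (0 : ℝ) < a := by linarith
  have hup : (a : ℝ) ^ 2 < (s - 1) ^ 2 := by nlinarith
  have hlo : (s - 2) ^ 2 ≤ (a : ℝ) ^ 2 := by nlinarith
  have h1 : 2 * s - 1 < (p : ℝ) - (a : ℝ) ^ 2 := by nlinarith
  have h2 : (p : ℝ) - (a : ℝ) ^ 2 ≤ 4 * s - 4 := by nlinarith
  have h3 : (a : ℝ) ^ 2 < p := by nlinarith
  have hrw : (p : ℝ) ^ ((5 : ℝ) / 2) = (p : ℝ) ^ 2 * s := by
    rw [show (5 : ℝ) / 2 = ((2 : ℕ) : ℝ) + 1 / 2 by norm_num, Real.rpow_add hp0,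
      Real.rpow_natCast, hs_def, Real.sqrt_eq_rpow]
  rw [hrw]
  have hApos : (0 : ℝ) < (p : ℝ) - (a : ℝ) ^ 2 := by nlinarith
  have hBpos : (0 : ℝ) < 9 * (p : ℝ) - (a : ℝ) ^ 2 := by nlinarith
  have e1 : 8 * (p : ℝ) < 9 * (p : ℝ) - (a : ℝ) ^ 2 := by linarith
  have e2 : (0 : ℝ) ≤ 2 * s - 1 := by linarith
  have e3 : (0 : ℝ) ≤ 8 * (p : ℝ) := by linarith
  have e4 : (p : ℝ) - (a : ℝ) ^ 2 < 4 * s := by linarith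
  have e5 : 9 * (p : ℝ) - (a : ℝ) ^ 2 ≤ 9 * (p : ℝ) := by nlinarith [sq_nonneg ((a : ℝ))]
  have e6 : (0 : ℝ) ≤ 4 * s := by linarith
  have hC : (2 * s - 1) * (8 * (p : ℝ)) < ((p : ℝ) - (a : ℝ) ^ 2) * (9 * (p : ℝ) - (a : ℝ) ^ 2) :=
    mul_lt_mul'' h1 e1 e2 e3
  have hD : ((p : ℝ) - (a : ℝ) ^ 2) * (9 * (p : ℝ) - (a : ℝ) ^ 2) < (4 * s) * (9 * (p : ℝ)) :=
    mul_lt_mul e4 e5 hBpos e6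
  have hp4 : (0:ℝ) < 4 * (p:ℝ) := by linarith
  have hC' := mul_lt_mul_of_pos_left hC hp4
  have hD' := mul_lt_mul_of_pos_left hD hp4
  have hps : (0:ℝ) < (p:ℝ) * (p:ℝ) * (s - 1) :=
    mul_pos (mul_pos hp0 hp0) (by linarith)
  constructor
  · nlinarith [hC', hps]
  · nlinarith [hD']
end
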